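/- Let Λ̂₃ := U³ ⊕ (−2) with δ̂ a generator of the (−2)-summand. Then the O(Λ̂₃)-orbit of a primitive element of Λ̂₃ is uniquely determined by its square and its divisibility. More precisely, for every primitive v ∈ Λ̂₃: if div(v) = 1, then q(v) is even and there exists an isometry φ ∈ O(Λ̂₃) with φ(v) = L_{q(v)/2}; and if div(v) = 2, then q(v) ≡ −2 (mod 8) and there exists an isometry φ ∈ O(Λ̂₃) with φ(v) = 2L_i − δ̂, where i = (q(v)+2)/8. -/

import Mathlib

open Matrix

section Prelude

variable {ι : Type*} [Fintype ι] [DecidableEq ι]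

/-- The bilinear form associated to a Gram matrix `G`. -/
def bf (G : Matrix ι ι ℤ) (x y : ι → ℤ) : ℤ := x ⬝ᵥ G.mulVec y

/-- `φ` is an isometry of the lattice `(ι → ℤ, bf G)`. -/
def IsIsometry (G : Matrix ι ι ℤ) (φ : (ι → ℤ) ≃ₗ[ℤ] (ι → ℤ)) : Prop :=
  ∀ x y, bf G (φ x) (φ y) = bf G x y

/-- `x` is a primitive lattice vector. -/
def IsPrimitive (x : ι → ℤ) : Prop :=
  x ≠ 0 ∧ ∀ (k : ℤ) (y : ι → ℤ), x = k • y → IsUnit k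

/-- `d` is the divisibility of `x`: the positive generator of the ideal `(x, L) ⊆ ℤ`. -/
def HasDiv (G : Matrix ι ι ℤ) (x : ι → ℤ) (d : ℤ) : Prop :=
  0 < d ∧ (∀ y, d ∣ bf G x y) ∧ ∀ s : ℤ, (∀ y, s ∣ bf G x y) → s ∣ d

/-- The Gram matrix of the hyperbolic plane `U`. -/
def gramU : Matrix (Fin 2) (Fin 2) ℤ := !![0, 1; 1, 0]

/-- The Gram matrix of `E₈(-1)`: the negative of the `E₈` Cartan matrix. -/
def gramE8 : Matrix (Fin 8) (Fin 8) ℤ := - CartanMatrix.E₈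

/-- The Gram matrix of `U³`. -/
def gramU3 : Matrix (Fin 2 × Fin 3) (Fin 2 × Fin 3) ℤ :=
  Matrix.blockDiagonal fun _ => gramU

/-- The Gram matrix of `U(2)³`. -/
def gramU2_3 : Matrix (Fin 2 × Fin 3) (Fin 2 × Fin 3) ℤ :=
  Matrix.blockDiagonal fun _ => (2 : ℤ) • gramU

/-- The subgroup of isometries of the lattice with Gram matrix `G`. -/
def isomGroup (G : Matrix ι ι ℤ) : Subgroup ((ι → ℤ) ≃ₗ[ℤ] (ι → ℤ)) where
  carrier := {φ | IsIsometry G φ}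
  one_mem' := fun _ _ => rfl
  mul_mem' := by
    intro a b ha hb x y
    show bf G (a (b x)) (a (b y)) = bf G x y
    rw [ha, hb]
  inv_mem' := by
    intro a ha x y
    have h := ha (a.symm x) (a.symm y)
    simp only [LinearEquiv.apply_symm_apply] at h
    exact h.symm

/-- Two nonzero lattice vectors span the same ray iff positive multiples agree. -/
def raySetoid (ι : Type*) : Setoid {x : ι → ℤ // x ≠ 0} where
  r x y := ∃ a b : ℤ, 0 < a ∧ 0 < b ∧ a • x.1 = b • y.1
  iseqv := by
    constructor
    · exact fun x => ⟨1, 1, one_pos, one_pos, rfl⟩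
    · rintro x y ⟨a, b, ha, hb, h⟩
      exact ⟨b, a, hb, ha, h.symm⟩
    · rintro x y z ⟨a, b, ha, hb, h⟩ ⟨c, d, hc, hd, h'⟩
      refine ⟨c * a, b * d, mul_pos hc ha, mul_pos hb hd, ?_⟩
      calc (c * a) • x.1 = c • a • x.1 := (smul_smul c a x.1).symm
        _ = c • b • y.1 := by rw [h]
        _ = b • c • y.1 := smul_comm c b y.1
        _ = b • d • z.1 := by rw [h']
        _ = (b * d) • z.1 := smul_smul b d z.1

/-- The set of rays (half-lines spanned by nonzero lattice vectors). -/
def Ray (ι : Type*) := Quotient (raySetoid ι)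

/-- The ray spanned by a nonzero lattice vector. -/
def rayMk (x : ι → ℤ) (hx : x ≠ 0) : Ray ι := Quotient.mk (raySetoid ι) ⟨x, hx⟩

/-- The action of a linear automorphism on rays. -/
def rayMap (φ : (ι → ℤ) ≃ₗ[ℤ] (ι → ℤ)) : Ray ι → Ray ι :=
  Quotient.map (fun p => ⟨φ p.1, fun h => p.2 (by simpa using φ.map_eq_zero_iff.mp h)⟩)
    (by
      rintro x y ⟨a, b, ha, hb, h⟩
      refine ⟨a, b, ha, hb, ?_⟩
      show a • φ x.1 = b • φ y.1
      rw [← _root_.map_smul, ← _root_.map_smul, h])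

end Prelude

/-- The index type of `Λ̂₃ = U³ ⊕ (-2)`. -/
abbrev I7 := (Fin 2 × Fin 3) ⊕ Fin 1

/-- The Gram matrix of `Λ̂₃ = U³ ⊕ (-2)`. -/
def gram3 : Matrix I7 I7 ℤ := Matrix.fromBlocks gramU3 0 0 !![-2]

/-- The element `L_i = i·e + f` in the first copy of `U` (so `q(L_i) = 2i`). -/
def Lv (i : ℤ) : Fin 2 × Fin 3 → ℤ :=
  fun p => if p = ((0 : Fin 2), (0 : Fin 3)) then i
    else if p = ((1 : Fin 2), (0 : Fin 3)) then 1 else 0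

/-- `L_i` viewed inside `Λ̂₃`. -/
def Lv3 (i : ℤ) : I7 → ℤ := Sum.elim (Lv i) 0

/-- The generator `δ̂` of the `(-2)`-summand of `Λ̂₃`. -/
def delta3 : I7 → ℤ := Sum.elim 0 1

section Aux
set_option linter.unusedSectionVars false

variable {ι : Type*} [Fintype ι] [DecidableEq ι] (G : Matrix ι ι ℤ)

lemma bf_add_left (x x' y : ι → ℤ) : bf G (x + x') y = bf G x y + bf G x' y := by
  simp [bf, add_dotProduct]
lemma bf_sub_left (x x' y : ι → ℤ) : bf G (x - x') y = bf G x y - bf G x' y := by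
  simp [bf, sub_dotProduct]
lemma bf_smul_left (k : ℤ) (x y : ι → ℤ) : bf G (k • x) y = k * bf G x y := by
  unfold bf; rw [smul_dotProduct]; rfl
lemma bf_neg_left (x y : ι → ℤ) : bf G (-x) y = - bf G x y := by
  simp [bf, neg_dotProduct]
lemma bf_add_right (x y y' : ι → ℤ) : bf G x (y + y') = bf G x y + bf G x y' := by
  simp [bf, Matrix.mulVec_add, dotProduct_add]
lemma bf_sub_right (x y y' : ι → ℤ) : bf G x (y - y') = bf G x y - bf G x y' := by
  simp [bf, Matrix.mulVec_sub, dotProduct_sub]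
lemma bf_smul_right (k : ℤ) (x y : ι → ℤ) : bf G x (k • y) = k * bf G x y := by
  unfold bf; rw [Matrix.mulVec_smul, dotProduct_smul]; rfl
lemma bf_neg_right (x y : ι → ℤ) : bf G x (-y) = - bf G x y := by
  simp [bf, Matrix.mulVec_neg, dotProduct_neg]

def bfL (a : ι → ℤ) : (ι → ℤ) →ₗ[ℤ] ℤ where
  toFun x := bf G x a
  map_add' x y := bf_add_left G x y a
  map_smul' k x := bf_smul_left G k x a

def tmap (e a : ι → ℤ) (m : ℤ) : (ι → ℤ) →ₗ[ℤ] (ι → ℤ) :=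
  LinearMap.id + (bfL G e).smulRight a - ((bfL G a) + m • (bfL G e)).smulRight e

lemma tmap_apply (e a : ι → ℤ) (m : ℤ) (x : ι → ℤ) :
    tmap G e a m x = x + (bf G x e) • a - (bf G x a + m * bf G x e) • e := by
  simp only [tmap, LinearMap.sub_apply, LinearMap.add_apply, LinearMap.id_apply,
    LinearMap.smulRight_apply, LinearMap.smul_apply, smul_eq_mul]
  rfl

section T
variable (e a : ι → ℤ) (m : ℤ)
  (hsym : ∀ x y, bf G x y = bf G y x)
  (hee : bf G e e = 0) (hae : bf G a e = 0) (ham : bf G a a = 2 * m)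

include hsym hee hae ham

lemma tmap_inv : ∀ x, tmap G e (-a) m (tmap G e a m x) = x := by
  intro x
  have hea : bf G e a = 0 := by rw [hsym]; exact hae
  simp only [tmap_apply, bf_add_left, bf_sub_left, bf_smul_left, bf_add_right,
    bf_sub_right, bf_smul_right, bf_neg_left, bf_neg_right, hee, hea, hae, ham]
  match_scalars <;> ring

def tequiv : (ι → ℤ) ≃ₗ[ℤ] (ι → ℤ) :=
  LinearEquiv.ofLinear (tmap G e a m) (tmap G e (-a) m)
    (by
      apply LinearMap.ext
      intro x
      have haen : bf G (-a) e = 0 := by rw [bf_neg_left, hae, neg_zero]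
      have hamn : bf G (-a) (-a) = 2 * m := by rw [bf_neg_left, bf_neg_right, ham]; ring
      simpa using tmap_inv G e (-a) m hsym hee haen hamn x)
    (by
      apply LinearMap.ext
      intro x
      simpa using tmap_inv G e a m hsym hee hae ham x)

lemma tequiv_apply (x : ι → ℤ) :
    tequiv G e a m hsym hee hae ham x
      = x + (bf G x e) • a - (bf G x a + m * bf G x e) • e := tmap_apply G e a m x

lemma tequiv_isometry : IsIsometry G (tequiv G e a m hsym hee hae ham) := by
  intro x y
  have hea : bf G e a = 0 := by rw [hsym]; exact hae
  simp only [tequiv_apply, bf_add_left, bf_sub_left, bf_smul_left, bf_add_right,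
    bf_sub_right, bf_smul_right, hee, hea, hae, ham]
  rw [hsym a y, hsym e y]
  ring

end T

/-! ### gram3 specifics -/

lemma bf_eval (x y : I7 → ℤ) : bf gram3 x y =
    x (.inl (0,0)) * y (.inl (1,0)) + x (.inl (1,0)) * y (.inl (0,0)) +
    x (.inl (0,1)) * y (.inl (1,1)) + x (.inl (1,1)) * y (.inl (0,1)) +
    x (.inl (0,2)) * y (.inl (1,2)) + x (.inl (1,2)) * y (.inl (0,2)) -
    2 * x (.inr 0) * y (.inr 0) := by
  simp [bf, gram3, gramU3, gramU, Matrix.mulVec, dotProduct,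
    Fintype.sum_sum_type, Fintype.sum_prod_type, Fin.sum_univ_succ,
    Matrix.fromBlocks, Matrix.blockDiagonal, Matrix.of_apply]
  ring

lemma hsym3 : ∀ x y : I7 → ℤ, bf gram3 x y = bf gram3 y x := by
  intro x y; rw [bf_eval, bf_eval]; ring

/-- Reachability by an isometry. -/
def Reach (v w : I7 → ℤ) : Prop :=
  ∃ φ : (I7 → ℤ) ≃ₗ[ℤ] (I7 → ℤ), IsIsometry gram3 φ ∧ φ v = w

lemma Reach.refl (v : I7 → ℤ) : Reach v v :=
  ⟨LinearEquiv.refl ℤ _, fun _ _ => rfl, rfl⟩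

lemma Reach.symm {v w : I7 → ℤ} (h : Reach v w) : Reach w v := by
  obtain ⟨φ, hiso, hv⟩ := h
  refine ⟨φ.symm, ?_, by rw [← hv, LinearEquiv.symm_apply_apply]⟩
  intro x y
  simpa using (hiso (φ.symm x) (φ.symm y)).symm

lemma Reach.trans {u v w : I7 → ℤ} (h1 : Reach u v) (h2 : Reach v w) : Reach u w := by
  obtain ⟨φ, hiso, hv⟩ := h1
  obtain ⟨ψ, hiso2, hw⟩ := h2
  exact ⟨φ.trans ψ, fun x y => by simpa using (hiso2 (φ x) (φ y)).trans (hiso x y),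
    by simp [hv, hw]⟩

lemma Reach.bf_eq {v w : I7 → ℤ} (h : Reach v w) : bf gram3 w w = bf gram3 v v := by
  obtain ⟨φ, hiso, hv⟩ := h; rw [← hv]; exact hiso v v

lemma Reach.primitive {v w : I7 → ℤ} (h : Reach v w) (hp : IsPrimitive v) : IsPrimitive w := by
  obtain ⟨φ, hiso, hv⟩ := h
  subst hv
  constructor
  · intro h0
    exact hp.1 (by simpa using congrArg φ.symm h0)
  · intro k y hk
    refine hp.2 k (φ.symm y) ?_
    have h2 := congrArg φ.symm hk
    rwa [φ.symm_apply_apply, _root_.map_smul] at h2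

lemma Reach.hasDiv {v w : I7 → ℤ} (h : Reach v w) {d : ℤ} (hd : HasDiv gram3 v d) :
    HasDiv gram3 w d := by
  obtain ⟨φ, hiso, hv⟩ := h
  subst hv
  refine ⟨hd.1, ?_, ?_⟩
  · intro y
    have := hiso v (φ.symm y)
    simp only [LinearEquiv.apply_symm_apply] at this
    rw [this]; exact hd.2.1 _
  · intro s hs
    refine hd.2.2 s ?_
    intro y
    have := hs (φ y)
    rwa [hiso] at this

/-- Generic one-step transvection reach. -/
lemma reach_tv (e a : I7 → ℤ) (m : ℤ) (hee : bf gram3 e e = 0) (hae : bf gram3 a e = 0)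
    (ham : bf gram3 a a = 2 * m) (v w : I7 → ℤ)
    (hw : ∀ i, w i = v i + bf gram3 v e * a i - (bf gram3 v a + m * bf gram3 v e) * e i) :
    Reach v w := by
  refine ⟨tequiv gram3 e a m hsym3 hee hae ham, tequiv_isometry gram3 e a m hsym3 hee hae ham, ?_⟩
  rw [tequiv_apply]
  funext i
  simp only [Pi.add_apply, Pi.sub_apply, Pi.smul_apply, smul_eq_mul]
  rw [hw i]

end Aux
section Aux2
def ev (j : Fin 3) : I7 → ℤ := fun i => if i = .inl (0, j) then 1 else 0
def fv (j : Fin 3) : I7 → ℤ := fun i => if i = .inl (1, j) then 1 else 0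
def dv : I7 → ℤ := fun i => if i = .inr 0 then 1 else 0

lemma bf_ev (x : I7 → ℤ) (j : Fin 3) : bf gram3 x (ev j) = x (.inl (1, j)) := by
  fin_cases j <;> simp (config := { decide := true }) [bf_eval, ev]
lemma bf_fv (x : I7 → ℤ) (j : Fin 3) : bf gram3 x (fv j) = x (.inl (0, j)) := by
  fin_cases j <;> simp (config := { decide := true }) [bf_eval, fv]
lemma bf_dv (x : I7 → ℤ) : bf gram3 x dv = -2 * x (.inr 0) := by
  simp [bf_eval, dv]

def set4 (j : Fin 3) (t : ℤ × ℤ × ℤ × ℤ) (v : I7 → ℤ) : I7 → ℤ :=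
  fun i => if i = .inl (0,0) then t.1 else if i = .inl (1,0) then t.2.1
    else if i = .inl (0,j) then t.2.2.1 else if i = .inl (1,j) then t.2.2.2 else v i

lemma set4_self (j : Fin 3) (v : I7 → ℤ) :
    set4 j (v (.inl (0,0)), v (.inl (1,0)), v (.inl (0,j)), v (.inl (1,j))) v = v := by
  funext i
  simp only [set4]
  split_ifs with h1 h2 h3 h4
  · rw [h1]
  · rw [h2]
  · rw [h3]
  · rw [h4]
  · rfl

section S4
set_option linter.unusedSectionVars false
variable {j : Fin 3} (hj : j ≠ 0)
include hj

lemma set4_e0 (t : ℤ×ℤ×ℤ×ℤ) (v : I7 → ℤ) : set4 j t v (.inl (0,0)) = t.1 := by simp [set4]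
lemma set4_f0 (t : ℤ×ℤ×ℤ×ℤ) (v : I7 → ℤ) : set4 j t v (.inl (1,0)) = t.2.1 := by
  simp [set4]
lemma set4_ej (t : ℤ×ℤ×ℤ×ℤ) (v : I7 → ℤ) : set4 j t v (.inl (0,j)) = t.2.2.1 := by
  simp [set4, hj]
lemma set4_fj (t : ℤ×ℤ×ℤ×ℤ) (v : I7 → ℤ) : set4 j t v (.inl (1,j)) = t.2.2.2 := by
  simp [set4, hj]

end S4

inductive R4 : (ℤ×ℤ×ℤ×ℤ) → (ℤ×ℤ×ℤ×ℤ) → Prop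
  | refl (t) : R4 t t
  | opA (k : ℤ) {a b c d : ℤ} {u} (h : R4 (a + k*d, b, c - k*b, d) u) : R4 (a,b,c,d) u
  | opB (k : ℤ) {a b c d : ℤ} {u} (h : R4 (a, b - k*c, c, d + k*a) u) : R4 (a,b,c,d) u
  | opC (k : ℤ) {a b c d : ℤ} {u} (h : R4 (a, b + k*d, c - k*a, d) u) : R4 (a,b,c,d) u
  | opD (k : ℤ) {a b c d : ℤ} {u} (h : R4 (a - k*c, b, c, d + k*b) u) : R4 (a,b,c,d) u

lemma R4.trans {t u s : ℤ×ℤ×ℤ×ℤ} (h1 : R4 t u) (h2 : R4 u s) : R4 t s := by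
  revert h2
  induction h1 with
  | refl t => exact id
  | opA k h ih => exact fun h2 => .opA k (ih h2)
  | opB k h ih => exact fun h2 => .opB k (ih h2)
  | opC k h ih => exact fun h2 => .opC k (ih h2)
  | opD k h ih => exact fun h2 => .opD k (ih h2)

lemma R4.cast {t u u' : ℤ×ℤ×ℤ×ℤ} (h : R4 t u) (e : u = u') : R4 t u' := e ▸ h

lemma r4_opA (k a b c d : ℤ) : R4 (a,b,c,d) (a + k*d, b, c - k*b, d) := .opA k (.refl _)
lemma r4_opB (k a b c d : ℤ) : R4 (a,b,c,d) (a, b - k*c, c, d + k*a) := .opB k (.refl _)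
lemma r4_opC (k a b c d : ℤ) : R4 (a,b,c,d) (a, b + k*d, c - k*a, d) := .opC k (.refl _)
lemma r4_opD (k a b c d : ℤ) : R4 (a,b,c,d) (a - k*c, b, c, d + k*b) := .opD k (.refl _)

private lemma pext {a b c d a' b' c' d' : ℤ} (h1 : a = a') (h2 : b = b') (h3 : c = c')
    (h4 : d = d') : (a,b,c,d) = (a',b',c',d') := by subst h1 h2 h3 h4; rfl

lemma r4_rowSwap (a b c d : ℤ) : R4 (a,b,c,d) (d, c, -b, -a) :=
  ((((r4_opA 1 a b c d).trans (r4_opB (-1) _ _ _ _)).trans (r4_opA 1 _ _ _ _)).cast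
    (pext (by ring) (by ring) (by ring) (by ring)))

lemma r4_colSwap (a b c d : ℤ) : R4 (a,b,c,d) (c, d, -a, -b) :=
  ((((r4_opC 1 a b c d).trans (r4_opD (-1) _ _ _ _)).trans (r4_opC 1 _ _ _ _)).cast
    (pext (by ring) (by ring) (by ring) (by ring)))

end Aux2
section Aux3

lemma R4_lift {j : Fin 3} (hj : j ≠ 0) (v : I7 → ℤ) {t u : ℤ×ℤ×ℤ×ℤ} (h : R4 t u) :
    Reach (set4 j t v) (set4 j u v) := by
  induction h with
  | refl t => exact Reach.refl _
  | @opA k a b c d u h ih =>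
      refine Reach.trans (reach_tv (ev j) (k • ev 0) 0 ?_ ?_ ?_ _ _ ?_) ih
      · rw [bf_ev]; simp (config := { decide := true }) [ev, hj, Prod.ext_iff]
      · rw [bf_smul_left, bf_ev]; simp (config := { decide := true }) [ev, hj, Prod.ext_iff]
      · rw [bf_smul_left, bf_smul_right, bf_ev]
        simp (config := { decide := true }) [ev, hj, Prod.ext_iff]
      · intro i
        rw [bf_smul_right, bf_ev, bf_ev, set4_fj hj, set4_f0 hj]
        simp only [set4, ev, Pi.smul_apply, smul_eq_mul]
        split_ifs <;> first | ring1 | (subst_vars; simp_all (config := { decide := true }) [Prod.ext_iff])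
  | @opB k a b c d u h ih =>
      refine Reach.trans (reach_tv (fv 0) (k • fv j) 0 ?_ ?_ ?_ _ _ ?_) ih
      · rw [bf_fv]; simp (config := { decide := true }) [fv, hj, Prod.ext_iff]
      · rw [bf_smul_left, bf_fv]; simp (config := { decide := true }) [fv, hj, Prod.ext_iff]
      · rw [bf_smul_left, bf_smul_right, bf_fv]
        simp (config := { decide := true }) [fv, hj, Prod.ext_iff]
      · intro i
        rw [bf_smul_right, bf_fv, bf_fv, set4_e0 hj, set4_ej hj]
        simp only [set4, fv, Pi.smul_apply, smul_eq_mul]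
        split_ifs <;> first | ring1 | (subst_vars; simp_all (config := { decide := true }) [Prod.ext_iff])
  | @opC k a b c d u h ih =>
      refine Reach.trans (reach_tv (ev j) (k • fv 0) 0 ?_ ?_ ?_ _ _ ?_) ih
      · rw [bf_ev]; simp (config := { decide := true }) [ev, hj, Prod.ext_iff]
      · rw [bf_smul_left, bf_ev]; simp (config := { decide := true }) [fv, hj, Prod.ext_iff]
      · rw [bf_smul_left, bf_smul_right, bf_fv]
        simp (config := { decide := true }) [fv, hj, Prod.ext_iff]
      · intro i
        rw [bf_smul_right, bf_ev, bf_fv, set4_fj hj, set4_e0 hj]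
        simp only [set4, ev, fv, Pi.smul_apply, smul_eq_mul]
        split_ifs <;> first | ring1 | (subst_vars; simp_all (config := { decide := true }) [Prod.ext_iff])
  | @opD k a b c d u h ih =>
      refine Reach.trans (reach_tv (fv j) ((-k) • ev 0) 0 ?_ ?_ ?_ _ _ ?_) ih
      · rw [bf_fv]; simp (config := { decide := true }) [fv, hj, Prod.ext_iff]
      · rw [bf_smul_left, bf_fv]; simp (config := { decide := true }) [ev, hj, Prod.ext_iff]
      · rw [bf_smul_left, bf_smul_right, bf_ev]
        simp (config := { decide := true }) [ev, hj, Prod.ext_iff]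
      · intro i
        rw [bf_smul_right, bf_fv, bf_ev, set4_ej hj, set4_f0 hj]
        simp only [set4, ev, fv, Pi.smul_apply, smul_eq_mul]
        split_ifs <;> first | ring1 | (subst_vars; simp_all (config := { decide := true }) [Prod.ext_iff])

end Aux3
section Aux4

lemma R4.cast' {t u : ℤ×ℤ×ℤ×ℤ} (x y z w : ℤ) (h : R4 t u) (e1 : u.1 = x)
    (e2 : u.2.1 = y) (e3 : u.2.2.1 = z) (e4 : u.2.2.2 = w) : R4 t (x,y,z,w) := by
  obtain ⟨u1, u2, u3, u4⟩ := u
  simp only at e1 e2 e3 e4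
  subst e1 e2 e3 e4
  exact h

lemma r4_diag_aux : ∀ n : ℕ, ∀ a b c d : ℤ, a ≠ 0 → a.natAbs ≤ n →
    ∃ x y, R4 (a,b,c,d) (x,y,0,0) := by
  intro n
  induction n with
  | zero => exact fun a b c d ha h0 => absurd (Int.natAbs_eq_zero.mp (Nat.le_zero.mp h0)) ha
  | succ n IH =>
    intro a b c d ha hn
    by_cases hd : a ∣ d
    · by_cases hc : a ∣ c
      · obtain ⟨qd, hqd⟩ := hd
        obtain ⟨qc, hqc⟩ := hc
        refine ⟨a, b + qd * c, ?_⟩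
        have s1 := (r4_opB (-qd) a b c d).cast' a (b + qd * c) c 0
          (by ring) (by ring) (by ring) (by rw [hqd]; ring)
        have s2 := (r4_opC qc a (b + qd * c) c 0).cast' a (b + qd * c) 0 0
          (by ring) (by ring) (by rw [hqc]; ring) (by ring)
        exact s1.trans s2
      · set r := c % a with hr
        have hr0 : r ≠ 0 := fun h0 => hc (Int.dvd_of_emod_eq_zero h0)
        have hrn : r.natAbs ≤ n := by
          have h1 : 0 ≤ r := Int.emod_nonneg c ha
          have h2 : r < |a| := by rw [Int.abs_eq_natAbs]; exact Int.emod_lt c ha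
          rw [Int.abs_eq_natAbs] at h2
          omega
        obtain ⟨x, y, hxy⟩ := IH r d (-a) (-(b + (c/a) * d)) hr0 hrn
        refine ⟨x, y, ?_⟩
        have s1 := (r4_opC (c/a) a b c d).cast' a (b + c/a * d) r d
          (by ring) (by ring) (by have := Int.mul_ediv_add_emod c a; rw [hr]; show c - c / a * a = c % a; linarith) (by ring)
        exact (s1.trans (r4_colSwap a (b + c/a * d) r d)).trans hxy
    · set r := d % a with hr
      have hr0 : r ≠ 0 := fun h0 => hd (Int.dvd_of_emod_eq_zero h0)
      have hrn : r.natAbs ≤ n := by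
        have h1 : 0 ≤ r := Int.emod_nonneg d ha
        have h2 : r < |a| := by rw [Int.abs_eq_natAbs]; exact Int.emod_lt d ha
        rw [Int.abs_eq_natAbs] at h2
        omega
      obtain ⟨x, y, hxy⟩ := IH r c (-(b + (d/a) * c)) (-a) hr0 hrn
      refine ⟨x, y, ?_⟩
      have s1 := (r4_opB (-(d/a)) a b c d).cast' a (b + d/a * c) c r
        (by ring) (by ring) (by ring) (by have := Int.mul_ediv_add_emod d a; rw [hr]; show d + -(d / a) * a = d % a; linarith)
      exact (s1.trans (r4_rowSwap a (b + d/a * c) c r)).trans hxy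

lemma r4_diag (a b c d : ℤ) : ∃ x y, R4 (a,b,c,d) (x,y,0,0) := by
  by_cases ha : a = 0
  · subst ha
    by_cases hd : d = 0
    · subst hd
      by_cases hc : c = 0
      · subst hc; exact ⟨0, b, R4.refl _⟩
      · obtain ⟨x, y, hxy⟩ := r4_diag_aux c.natAbs c 0 (-0) (-b) hc le_rfl
        exact ⟨x, y, (r4_colSwap 0 b c 0).trans hxy⟩
    · obtain ⟨x, y, hxy⟩ := r4_diag_aux d.natAbs d c (-b) (-0) hd le_rfl
      exact ⟨x, y, (r4_rowSwap 0 b c d).trans hxy⟩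
  · exact r4_diag_aux a.natAbs a b c d ha le_rfl

/-- Background vector: everything 0 except the `δ`-coordinate. -/
def bg (c : ℤ) : I7 → ℤ := fun i => if i = .inr 0 then c else 0

/-- Endgame states: copy 3 of `U` is zero. -/
def S5 (a b c2 d2 c : ℤ) : I7 → ℤ := set4 1 (a, b, c2, d2) (bg c)

lemma S5_eq (x1 y1 x2 y2 : ℤ) (v : I7 → ℤ) :
    set4 2 (x2, y2, 0, 0) (set4 1 (x1, y1, 0, 0) v) = S5 x2 y2 0 0 (v (.inr 0)) := by
  funext i
  rcases i with ⟨x, y⟩ | z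
  · fin_cases x <;> fin_cases y <;>
      simp (config := { decide := true }) [set4, S5, bg]
  · fin_cases z
    simp (config := { decide := true }) [set4, S5, bg]

lemma reach_to_S5 (v : I7 → ℤ) : ∃ a b c, Reach v (S5 a b 0 0 c) := by
  obtain ⟨x1, y1, h1⟩ := r4_diag (v (.inl (0,0))) (v (.inl (1,0))) (v (.inl (0,1))) (v (.inl (1,1)))
  have r1 : Reach v (set4 1 (x1,y1,0,0) v) := by
    have := R4_lift (j := 1) (by decide) v h1
    rwa [set4_self] at this
  set w := set4 1 (x1,y1,0,0) v with hw
  obtain ⟨x2, y2, h2⟩ := r4_diag (w (.inl (0,0))) (w (.inl (1,0))) (w (.inl (0,2))) (w (.inl (1,2)))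
  have r2 : Reach w (set4 2 (x2,y2,0,0) w) := by
    have := R4_lift (j := 2) (by decide) w h2
    rwa [set4_self] at this
  refine ⟨x2, y2, v (.inr 0), (r1.trans (r2.trans ?_))⟩
  rw [hw, S5_eq x1 y1 x2 y2 v]
  exact Reach.refl _

end Aux4
section Aux5

lemma ap_coprime (a c n : ℤ) (hn : n ≠ 0)
    (h : ∀ s : ℤ, s ∣ a → s ∣ c → s ∣ n → IsUnit s) :
    ∃ k : ℤ, ∀ s : ℤ, s ∣ (a + k * c) → s ∣ n → IsUnit s := by
  classical
  set S : Finset ℕ := n.natAbs.primeFactors.filter (fun p => ¬ (p:ℤ) ∣ a) with hS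
  set k : ℤ := ((∏ p ∈ S, p : ℕ) : ℤ) with hk
  refine ⟨k, ?_⟩
  intro s hs hsn
  by_contra hu
  have hs1 : s.natAbs ≠ 1 := fun h1 => hu (Int.isUnit_iff_natAbs_eq.mpr h1)
  obtain ⟨q, hq, hqs⟩ := Int.exists_prime_and_dvd hs1
  set p : ℕ := q.natAbs with hp
  have hpp : Nat.Prime p := Int.prime_iff_natAbs_prime.mp hq
  have hppz : Prime (p : ℤ) := Nat.prime_iff_prime_int.mp hpp
  have hpakc : (p:ℤ) ∣ a + k * c := (Int.natAbs_dvd.mpr hqs).trans hs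
  have hpn : (p:ℤ) ∣ n := (Int.natAbs_dvd.mpr hqs).trans hsn
  have hpnn : p ∣ n.natAbs := by
    rw [← Int.natAbs_natCast p]; exact Int.natAbs_dvd_natAbs.mpr hpn
  have hpF : p ∈ n.natAbs.primeFactors :=
    Nat.mem_primeFactors.mpr ⟨hpp, hpnn, Int.natAbs_ne_zero.mpr hn⟩
  by_cases hpa : (p:ℤ) ∣ a
  · have hpS : p ∉ S := by simp [hS, Finset.mem_filter, hpa]
    have hpkc : (p:ℤ) ∣ k * c := by
      have := dvd_sub hpakc hpa
      simpa using this
    rcases hppz.dvd_mul.mp hpkc with hpk | hpc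
    · have hpkn : p ∣ ∏ q ∈ S, q := by
        rwa [hk, Int.natCast_dvd_natCast] at hpk
      obtain ⟨r, hrS, hpr⟩ := (hpp.prime.dvd_finset_prod_iff _).mp hpkn
      have hrP : Nat.Prime r := Nat.prime_of_mem_primeFactors (Finset.mem_filter.mp hrS).1
      have : p = r := (Nat.prime_dvd_prime_iff_eq hpp hrP).mp hpr
      exact hpS (this ▸ hrS)
    · exact (hppz.not_unit) (h (p:ℤ) hpa hpc hpn)
  · have hpS : p ∈ S := Finset.mem_filter.mpr ⟨hpF, hpa⟩
    have hpk : (p:ℤ) ∣ k := by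
      rw [hk, Int.natCast_dvd_natCast]
      exact Finset.dvd_prod_of_mem _ hpS
    have : (p:ℤ) ∣ a := by
      have := dvd_sub hpakc (hpk.mul_right c)
      simpa using this
    exact hpa this

lemma isUnit_of_dvd_coords {x : I7 → ℤ} (hp : IsPrimitive x) {s : ℤ}
    (hs : ∀ i, s ∣ x i) : IsUnit s := by
  rcases eq_or_ne s 0 with rfl | hs0
  · exfalso
    apply hp.1
    funext i
    exact zero_dvd_iff.mp (hs i)
  · refine hp.2 s (fun i => x i / s) (funext fun i => ?_)
    rw [Pi.smul_apply, smul_eq_mul, Int.mul_ediv_cancel' (hs i)]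

end Aux5
section Aux6

variable (a b c2 d2 c : ℤ)

lemma S5_00 : S5 a b c2 d2 c (.inl (0,0)) = a := by
  simp (config := { decide := true }) [S5, set4, bg]
lemma S5_10 : S5 a b c2 d2 c (.inl (1,0)) = b := by
  simp (config := { decide := true }) [S5, set4, bg]
lemma S5_01 : S5 a b c2 d2 c (.inl (0,1)) = c2 := by
  simp (config := { decide := true }) [S5, set4, bg]
lemma S5_11 : S5 a b c2 d2 c (.inl (1,1)) = d2 := by
  simp (config := { decide := true }) [S5, set4, bg]
lemma S5_02 : S5 a b c2 d2 c (.inl (0,2)) = 0 := by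
  simp (config := { decide := true }) [S5, set4, bg]
lemma S5_12 : S5 a b c2 d2 c (.inl (1,2)) = 0 := by
  simp (config := { decide := true }) [S5, set4, bg]
lemma S5_inr : S5 a b c2 d2 c (.inr 0) = c := by
  simp (config := { decide := true }) [S5, set4, bg]

lemma bf_S5 (y : I7 → ℤ) : bf gram3 (S5 a b c2 d2 c) y =
    a * y (.inl (1,0)) + b * y (.inl (0,0)) + c2 * y (.inl (1,1)) + d2 * y (.inl (0,1))
      - 2 * c * y (.inr 0) := by
  rw [bf_eval, S5_00, S5_10, S5_01, S5_11, S5_02, S5_12, S5_inr]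
  ring

lemma bf_S5_self : bf gram3 (S5 a b c2 d2 c) (S5 a b c2 d2 c)
    = 2*(a*b + c2*d2) - 2*c*c := by
  rw [bf_S5, S5_00, S5_10, S5_01, S5_11, S5_inr]
  ring

lemma reach_S5_of_r4 {a b c2 d2 a' b' c2' d2' : ℤ} (c : ℤ)
    (h : R4 (a,b,c2,d2) (a',b',c2',d2')) :
    Reach (S5 a b c2 d2 c) (S5 a' b' c2' d2' c) :=
  R4_lift (j := 1) (by decide) (bg c) h

/-- `E(f₀, kδ)`. -/
lemma reach_M2 (k : ℤ) :
    Reach (S5 a b c2 d2 c) (S5 a (b + 2*k*c + k*k*a) c2 d2 (c + k*a)) := by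
  refine reach_tv (fv 0) (k • dv) (-(k*k)) ?_ ?_ ?_ _ _ ?_
  · rw [bf_fv]; simp (config := { decide := true }) [fv]
  · rw [bf_smul_left, bf_fv]; simp (config := { decide := true }) [dv]
  · rw [bf_smul_left, bf_smul_right, bf_dv]
    simp (config := { decide := true }) [dv]; ring
  · intro i
    rw [bf_fv, bf_smul_right, bf_dv, S5_00, S5_inr]
    rcases i with ⟨x, y⟩ | z
    · fin_cases x <;> fin_cases y <;>
        simp (config := { decide := true }) [S5, set4, bg, dv, fv] <;> ring
    · fin_cases z
      simp (config := { decide := true }) [S5, set4, bg, dv, fv]; ring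

/-- `E(e₀, kδ)`. -/
lemma reach_M1 (k : ℤ) :
    Reach (S5 a b c2 d2 c) (S5 (a + 2*k*c + k*k*b) b c2 d2 (c + k*b)) := by
  refine reach_tv (ev 0) (k • dv) (-(k*k)) ?_ ?_ ?_ _ _ ?_
  · rw [bf_ev]; simp (config := { decide := true }) [ev]
  · rw [bf_smul_left, bf_ev]; simp (config := { decide := true }) [dv]
  · rw [bf_smul_left, bf_smul_right, bf_dv]
    simp (config := { decide := true }) [dv]; ring
  · intro i
    rw [bf_ev, bf_smul_right, bf_dv, S5_10, S5_inr]
    rcases i with ⟨x, y⟩ | z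
    · fin_cases x <;> fin_cases y <;>
        simp (config := { decide := true }) [S5, set4, bg, dv, ev] <;> ring
    · fin_cases z
      simp (config := { decide := true }) [S5, set4, bg, dv, ev]; ring

/-- `E(f₁, kδ)`. -/
lemma reach_M3 (k : ℤ) :
    Reach (S5 a b c2 d2 c) (S5 a b c2 (d2 + 2*k*c + k*k*c2) (c + k*c2)) := by
  refine reach_tv (fv 1) (k • dv) (-(k*k)) ?_ ?_ ?_ _ _ ?_
  · rw [bf_fv]; simp (config := { decide := true }) [fv]
  · rw [bf_smul_left, bf_fv]; simp (config := { decide := true }) [dv]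
  · rw [bf_smul_left, bf_smul_right, bf_dv]
    simp (config := { decide := true }) [dv]; ring
  · intro i
    rw [bf_fv, bf_smul_right, bf_dv, S5_01, S5_inr]
    rcases i with ⟨x, y⟩ | z
    · fin_cases x <;> fin_cases y <;>
        simp (config := { decide := true }) [S5, set4, bg, dv, fv] <;> ring
    · fin_cases z
      simp (config := { decide := true }) [S5, set4, bg, dv, fv]; ring

/-- The final transvection in the `div = 1` case. -/
lemma reach_F1 : Reach (S5 a b 1 0 c) (S5 0 0 1 (a*b - c*c) 0) := by
  refine reach_tv (fv 1) ((-a) • ev 0 + (-b) • fv 0 + (-c) • dv) (a*b - c*c) ?_ ?_ ?_ _ _ ?_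
  · rw [bf_fv]; simp (config := { decide := true }) [fv]
  · rw [bf_add_left, bf_add_left, bf_smul_left, bf_smul_left, bf_smul_left,
      bf_fv, bf_fv, bf_fv]
    simp (config := { decide := true }) [ev, fv, dv]
  · simp only [bf_add_left, bf_add_right, bf_smul_left, bf_smul_right, bf_ev, bf_fv, bf_dv]
    simp (config := { decide := true }) [ev, fv, dv]
    ring
  · intro i
    simp only [bf_add_right, bf_smul_right]
    rw [bf_fv, bf_ev, bf_fv, bf_dv, S5_01, S5_10, S5_00, S5_inr]
    rcases i with ⟨x, y⟩ | z
    · fin_cases x <;> fin_cases y <;>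
        simp (config := { decide := true }) [S5, set4, bg, dv, ev, fv] <;> ring
    · fin_cases z
      simp (config := { decide := true }) [S5, set4, bg, dv, ev, fv]; try ring

/-- The final transvection in the `div = 2` case. -/
lemma reach_F2 (p q : ℤ) : Reach (S5 (2*p) (2*q) 2 d2 c) (S5 0 0 2 (d2 + 2*p*q) c) := by
  refine reach_tv (fv 1) ((-p) • ev 0 + (-q) • fv 0) (p*q) ?_ ?_ ?_ _ _ ?_
  · rw [bf_fv]; simp (config := { decide := true }) [fv]
  · rw [bf_add_left, bf_smul_left, bf_smul_left, bf_fv, bf_fv]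
    simp (config := { decide := true }) [ev, fv]
  · simp only [bf_add_left, bf_add_right, bf_smul_left, bf_smul_right, bf_ev, bf_fv, bf_dv]
    simp (config := { decide := true }) [ev, fv]
    ring
  · intro i
    simp only [bf_add_right, bf_smul_right]
    rw [bf_fv, bf_ev, bf_fv, S5_01, S5_10, S5_00]
    rcases i with ⟨x, y⟩ | z
    · fin_cases x <;> fin_cases y <;>
        simp (config := { decide := true }) [S5, set4, bg, ev, fv] <;> ring
    · fin_cases z
      simp (config := { decide := true }) [S5, set4, bg, ev, fv]; try ring

end Aux6
section Aux7

lemma S5_coord_dvd {s a b c2 d2 c : ℤ} (h1 : s ∣ a) (h2 : s ∣ b) (h3 : s ∣ c2)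
    (h4 : s ∣ d2) (h5 : s ∣ c) : ∀ i, s ∣ S5 a b c2 d2 c i := by
  intro i
  rcases i with ⟨x, y⟩ | z
  · fin_cases x <;> fin_cases y <;>
      simp (config := { decide := true }) [S5, set4, bg] <;> try assumption
  · fin_cases z
    simp (config := { decide := true }) [S5, set4, bg]
    exact h5

lemma S5_Lv3 (m : ℤ) : S5 m 1 0 0 0 = Lv3 m := by
  funext i
  rcases i with ⟨x, y⟩ | z
  · fin_cases x <;> fin_cases y <;>
      simp (config := { decide := true }) [S5, set4, bg, Lv3, Lv]
  · fin_cases z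
    simp (config := { decide := true }) [S5, set4, bg, Lv3, Lv]

lemma S5_2Lv3 (i : ℤ) : S5 (2*i) 2 0 0 (-1) = 2 • Lv3 i - delta3 := by
  funext p
  rcases p with ⟨x, y⟩ | z
  · fin_cases x <;> fin_cases y <;>
      simp (config := { decide := true }) [S5, set4, bg, Lv3, Lv, delta3]
  · fin_cases z
    simp (config := { decide := true }) [S5, set4, bg, Lv3, Lv, delta3]

/-- Endgame for `div = 1`, assuming the corner `a` is nonzero. -/
lemma div1_end (a b c : ℤ) (ha : a ≠ 0) (hd : HasDiv gram3 (S5 a b 0 0 c) 1) :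
    ∃ i, bf gram3 (S5 a b 0 0 c) (S5 a b 0 0 c) = 2*i ∧ Reach (S5 a b 0 0 c) (Lv3 i) := by
  have key : ∀ s : ℤ, s ∣ b → s ∣ 2*c → s ∣ a → IsUnit s := by
    intro s hsb hsc hsa
    have hdvd : ∀ y, s ∣ bf gram3 (S5 a b 0 0 c) y := by
      intro y
      rw [bf_S5]
      have e : a * y (.inl (1,0)) + b * y (.inl (0,0)) + 0 * y (.inl (1,1))
          + 0 * y (.inl (0,1)) - 2 * c * y (.inr 0)
          = a * y (.inl (1,0)) + b * y (.inl (0,0)) - (2*c) * y (.inr 0) := by ring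
      rw [e]
      exact dvd_sub (dvd_add (hsa.mul_right _) (hsb.mul_right _)) (hsc.mul_right _)
    exact isUnit_of_dvd_one (hd.2.2 s hdvd)
  obtain ⟨k, hk⟩ := ap_coprime b (2*c) a ha key
  set b2 := b + 2*k*c + k*k*a with hb2
  set cc := c + k*a with hcc
  have r2 : Reach (S5 a b 0 0 c) (S5 a b2 0 0 cc) := reach_M2 a b 0 0 c k
  have kcop : ∀ s : ℤ, s ∣ a → s ∣ b2 → IsUnit s := by
    intro s hsa hsb2
    refine hk s ?_ hsa
    have e : b + k * (2*c) = b2 - k*k*a := by rw [hb2]; ring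
    rw [e]
    exact dvd_sub hsb2 (hsa.mul_left _)
  have hg : Int.gcd a b2 = 1 := by
    have hu := kcop (Int.gcd a b2 : ℤ) (Int.gcd_dvd_left _ _) (Int.gcd_dvd_right _ _)
    rcases Int.isUnit_iff.mp hu with h | h <;> omega
  have hBez : 1 = a * Int.gcdA a b2 + b2 * Int.gcdB a b2 := by
    have := Int.gcd_eq_gcd_ab a b2
    rw [hg] at this
    exact_mod_cast this
  set x := Int.gcdA a b2
  set y := Int.gcdB a b2
  have hr4 : R4 (a, b2, 0, 0) (a, b2, 1, 0) := by
    have s1 := (r4_opC (-x) a b2 0 0).cast' a b2 (x*a) 0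
      (by ring) (by ring) (by ring) (by ring)
    have s2 := (r4_opA (-y) a b2 (x*a) 0).cast' a b2 1 0
      (by ring) (by ring) (by simp only; linarith [hBez]) (by ring)
    exact s1.trans s2
  have r3 : Reach (S5 a b2 0 0 cc) (S5 a b2 1 0 cc) := reach_S5_of_r4 cc hr4
  have r4 : Reach (S5 a b2 1 0 cc) (S5 0 0 1 (a*b2 - cc*cc) 0) := reach_F1 a b2 cc
  set m := a*b2 - cc*cc with hm
  have hr5 : R4 (0, 0, 1, m) (m, 1, 0, 0) :=
    (r4_rowSwap 0 0 1 m).cast' m 1 0 0 (by ring) (by ring) (by ring) (by ring)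
  have r5 : Reach (S5 0 0 1 m 0) (S5 m 1 0 0 0) := reach_S5_of_r4 0 hr5
  have rtot : Reach (S5 a b 0 0 c) (Lv3 m) := by
    rw [← S5_Lv3]
    exact r2.trans (r3.trans (r4.trans r5))
  refine ⟨m, ?_, rtot⟩
  have := rtot.bf_eq
  rw [← S5_Lv3, bf_S5_self] at this
  rw [← this]
  ring

/-- Endgame for `div = 2`, assuming the corner `a` is nonzero. -/
lemma div2_end (a b c : ℤ) (ha : a ≠ 0) (hp : IsPrimitive (S5 a b 0 0 c))
    (hd : HasDiv gram3 (S5 a b 0 0 c) 2) :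
    ∃ i, bf gram3 (S5 a b 0 0 c) (S5 a b 0 0 c) = 8*i - 2 ∧
      Reach (S5 a b 0 0 c) (2 • Lv3 i - delta3) := by
  have h2a : (2:ℤ) ∣ a := by
    have := hd.2.1 (fv 0)
    rwa [bf_fv, S5_00] at this
  have h2b : (2:ℤ) ∣ b := by
    have := hd.2.1 (ev 0)
    rwa [bf_ev, S5_10] at this
  obtain ⟨p, hpa⟩ := h2a
  obtain ⟨q, hqb⟩ := h2b
  have hc_odd : ¬ (2:ℤ) ∣ c := by
    intro h2c
    have hu := isUnit_of_dvd_coords hp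
      (S5_coord_dvd ⟨p, hpa⟩ ⟨q, hqb⟩ (dvd_zero 2) (dvd_zero 2) h2c)
    rcases Int.isUnit_iff.mp hu with h | h <;> omega
  have hp0 : p ≠ 0 := by rintro rfl; simp at hpa; exact ha hpa
  have key : ∀ s : ℤ, s ∣ q → s ∣ c → s ∣ p → IsUnit s := by
    intro s hsq hsc hsp
    exact isUnit_of_dvd_coords hp
      (S5_coord_dvd (hpa ▸ hsp.mul_left 2) (hqb ▸ hsq.mul_left 2)
        (dvd_zero s) (dvd_zero s) hsc)
  obtain ⟨k, hk⟩ := ap_coprime q c p hp0 key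
  set q2 := q + k*c + k*k*p with hq2
  set b2 := b + 2*k*c + k*k*a with hb2
  have hb2q2 : b2 = 2*q2 := by rw [hb2, hq2, hpa, hqb]; ring
  set cc := c + k*a with hcc
  have hcc_odd : ¬ (2:ℤ) ∣ cc := by
    intro h
    apply hc_odd
    have : c = cc - k*a := by rw [hcc]; ring
    rw [this, hpa]
    exact dvd_sub h (by exact ⟨k*p, by ring⟩)
  have r2 : Reach (S5 a b 0 0 c) (S5 a b2 0 0 cc) := reach_M2 a b 0 0 c k
  have kcop : ∀ s : ℤ, s ∣ p → s ∣ q2 → IsUnit s := by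
    intro s hsp hsq2
    refine hk s ?_ hsp
    have e : q + k * c = q2 - k*k*p := by rw [hq2]; ring
    rw [e]
    exact dvd_sub hsq2 (hsp.mul_left _)
  have hg : Int.gcd p q2 = 1 := by
    have hu := kcop (Int.gcd p q2 : ℤ) (Int.gcd_dvd_left _ _) (Int.gcd_dvd_right _ _)
    rcases Int.isUnit_iff.mp hu with h | h <;> omega
  have hBez : 1 = p * Int.gcdA p q2 + q2 * Int.gcdB p q2 := by
    have := Int.gcd_eq_gcd_ab p q2
    rw [hg] at this
    exact_mod_cast this
  set x := Int.gcdA p q2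
  set y := Int.gcdB p q2
  have hr4 : R4 (a, b2, 0, 0) (a, b2, 2, 0) := by
    have s1 := (r4_opC (-x) a b2 0 0).cast' a b2 (x*a) 0
      (by ring) (by ring) (by ring) (by ring)
    have s2 := (r4_opA (-y) a b2 (x*a) 0).cast' a b2 2 0
      (by ring) (by ring)
      (by simp only; rw [hpa, hb2q2]; linarith [hBez]) (by ring)
    exact s1.trans s2
  have r3 : Reach (S5 a b2 0 0 cc) (S5 a b2 2 0 cc) := reach_S5_of_r4 cc hr4
  -- adjust c to -1
  have h2cc : (2:ℤ) ∣ (-1 - cc) := by omega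
  set k3 := (-1 - cc)/2 with hk3
  have hk3e : 2 * k3 = -1 - cc := Int.mul_ediv_cancel' h2cc
  have r4 : Reach (S5 a b2 2 0 cc) (S5 a b2 2 (2*k3*cc + k3*k3*2) (-1)) := by
    have := reach_M3 a b2 2 0 cc k3
    rw [show cc + k3*2 = -1 by linarith, show (0:ℤ) + 2*k3*cc + k3*k3*2 = 2*k3*cc + k3*k3*2 by ring] at this
    exact this
  set D := 2*k3*cc + k3*k3*2 with hD
  have r5 : Reach (S5 a b2 2 D (-1)) (S5 0 0 2 (D + 2*p*q2) (-1)) := by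
    rw [hpa, hb2q2]
    exact reach_F2 D (-1) p q2
  set i := k3*cc + k3*k3 + p*q2 with hi
  have hBi : D + 2*p*q2 = 2*i := by rw [hD, hi]; ring
  have hr6 : R4 (0, 0, 2, 2*i) (2*i, 2, 0, 0) :=
    (r4_rowSwap 0 0 2 (2*i)).cast' (2*i) 2 0 0 (by ring) (by ring) (by ring) (by ring)
  have r6 : Reach (S5 0 0 2 (2*i) (-1)) (S5 (2*i) 2 0 0 (-1)) := reach_S5_of_r4 (-1) hr6
  have rtot : Reach (S5 a b 0 0 c) (2 • Lv3 i - delta3) := by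
    rw [← S5_2Lv3]
    refine r2.trans (r3.trans (r4.trans ?_))
    rw [show S5 a b2 2 D (-1) = S5 a b2 2 D (-1) from rfl]
    refine r5.trans ?_
    rw [hBi]
    exact r6
  refine ⟨i, ?_, rtot⟩
  have := rtot.bf_eq
  rw [← S5_2Lv3, bf_S5_self] at this
  rw [← this]
  ring

end Aux7
section Aux8

lemma S5_zero : S5 0 0 0 0 0 = 0 := by
  funext i
  rcases i with ⟨x, y⟩ | z
  · fin_cases x <;> fin_cases y <;>
      simp (config := { decide := true }) [S5, set4, bg]
  · fin_cases z
    simp (config := { decide := true }) [S5, set4, bg]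

lemma div1_case (v : I7 → ℤ) (hv : IsPrimitive v) (hd : HasDiv gram3 v 1) :
    ∃ i, bf gram3 v v = 2*i ∧ Reach v (Lv3 i) := by
  obtain ⟨a, b, c, hr⟩ := reach_to_S5 v
  have hd' := hr.hasDiv hd
  have step : ∃ a' b' c', a' ≠ 0 ∧ Reach (S5 a b 0 0 c) (S5 a' b' 0 0 c') := by
    by_cases ha : a = 0
    · subst ha
      by_cases hb : b = 0
      · exfalso
        subst hb
        have h2 : ∀ y, (2:ℤ) ∣ bf gram3 (S5 0 0 0 0 c) y := by
          intro y
          refine ⟨-(c * y (.inr 0)), ?_⟩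
          rw [bf_S5]; ring
        have h21 := hd'.2.2 2 h2
        norm_num at h21
      · by_cases h2cb : 2*c + b = 0
        · refine ⟨0 + 2*(-1)*c + (-1)*(-1)*b, b, c + (-1)*b, ?_, reach_M1 0 b 0 0 c (-1)⟩
          intro h; apply hb; linarith
        · refine ⟨0 + 2*1*c + 1*1*b, b, c + 1*b, ?_, reach_M1 0 b 0 0 c 1⟩
          intro h; apply h2cb; linarith
    · exact ⟨a, b, c, ha, Reach.refl _⟩
  obtain ⟨a', b', c', ha', hstep⟩ := step
  have rv : Reach v (S5 a' b' 0 0 c') := hr.trans hstep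
  obtain ⟨i, hq, hR⟩ := div1_end a' b' c' ha' (rv.hasDiv hd)
  exact ⟨i, by rw [← rv.bf_eq]; exact hq, rv.trans hR⟩

lemma div2_case (v : I7 → ℤ) (hv : IsPrimitive v) (hd : HasDiv gram3 v 2) :
    ∃ i, bf gram3 v v = 8*i - 2 ∧ Reach v (2 • Lv3 i - delta3) := by
  obtain ⟨a, b, c, hr⟩ := reach_to_S5 v
  have hd' := hr.hasDiv hd
  have hp' := hr.primitive hv
  have step : ∃ a' b' c', a' ≠ 0 ∧ Reach (S5 a b 0 0 c) (S5 a' b' 0 0 c') := by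
    by_cases ha : a = 0
    · subst ha
      by_cases hb : b = 0
      · subst hb
        have hc0 : c ≠ 0 := by
          rintro rfl
          exact hp'.1 S5_zero
        refine ⟨0 + 2*1*c + 1*1*0, 0, c + 1*0, ?_, reach_M1 0 0 0 0 c 1⟩
        intro h; apply hc0; linarith
      · by_cases h2cb : 2*c + b = 0
        · refine ⟨0 + 2*(-1)*c + (-1)*(-1)*b, b, c + (-1)*b, ?_, reach_M1 0 b 0 0 c (-1)⟩
          intro h; apply hb; linarith
        · refine ⟨0 + 2*1*c + 1*1*b, b, c + 1*b, ?_, reach_M1 0 b 0 0 c 1⟩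
          intro h; apply h2cb; linarith
    · exact ⟨a, b, c, ha, Reach.refl _⟩
  obtain ⟨a', b', c', ha', hstep⟩ := step
  have rv : Reach v (S5 a' b' 0 0 c') := hr.trans hstep
  obtain ⟨i, hq, hR⟩ := div2_end a' b' c' ha' (rv.primitive hv) (rv.hasDiv hd)
  exact ⟨i, by rw [← rv.bf_eq]; exact hq, rv.trans hR⟩

end Aux8

/-- The `O(Λ̂₃)`-orbit of a primitive element of `Λ̂₃ = U³ ⊕ (-2)` is uniquely determined by its
square and its divisibility.  More precisely: if `div(v) = 1` then `q(v)` is even and `v` can be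
moved to `L_{q(v)/2}` by an isometry; if `div(v) = 2` then `q(v) ≡ -2 (mod 8)` and `v` can be
moved to `2L_i - δ̂` with `i = (q(v)+2)/8`. -/
theorem orbits_U3_minus2 (v : I7 → ℤ) (hv : IsPrimitive v) :
    (∀ w : I7 → ℤ, IsPrimitive w → bf gram3 v v = bf gram3 w w →
      (∀ d : ℤ, HasDiv gram3 v d ↔ HasDiv gram3 w d) →
      ∃ φ : (I7 → ℤ) ≃ₗ[ℤ] (I7 → ℤ), IsIsometry gram3 φ ∧ φ v = w) ∧
    (HasDiv gram3 v 1 → ∃ i : ℤ, bf gram3 v v = 2 * i ∧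
      ∃ φ : (I7 → ℤ) ≃ₗ[ℤ] (I7 → ℤ), IsIsometry gram3 φ ∧ φ v = Lv3 i) ∧
    (HasDiv gram3 v 2 → ∃ i : ℤ, bf gram3 v v = 8 * i - 2 ∧
      ∃ φ : (I7 → ℤ) ≃ₗ[ℤ] (I7 → ℤ), IsIsometry gram3 φ ∧ φ v = 2 • Lv3 i - delta3) := by
  refine ⟨?_, div1_case v hv, div2_case v hv⟩
  intro w hw hq hdiff
  -- the pairings of v
  set A0 := v (.inl (0,0)) with hA0
  set B0 := v (.inl (1,0)) with hB0
  set A1 := v (.inl (0,1)) with hA1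
  set B1 := v (.inl (1,1)) with hB1
  set A2 := v (.inl (0,2)) with hA2
  set B2 := v (.inl (1,2)) with hB2
  set C := v (.inr 0) with hC
  set d : ℕ := Int.gcd A0 (Int.gcd B0 (Int.gcd A1 (Int.gcd B1 (Int.gcd A2 (Int.gcd B2 (2*C)))))) with hdd
  have hdA0 : (d:ℤ) ∣ A0 := (Int.gcd_dvd_left _ _)
  have h1 : (d:ℤ) ∣ (Int.gcd B0 (Int.gcd A1 (Int.gcd B1 (Int.gcd A2 (Int.gcd B2 (2*C))))) : ℤ) :=
    (Int.gcd_dvd_right _ _)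
  have hdB0 : (d:ℤ) ∣ B0 := h1.trans (Int.gcd_dvd_left _ _)
  have h2 : (d:ℤ) ∣ (Int.gcd A1 (Int.gcd B1 (Int.gcd A2 (Int.gcd B2 (2*C)))) : ℤ) :=
    h1.trans (Int.gcd_dvd_right _ _)
  have hdA1 : (d:ℤ) ∣ A1 := h2.trans (Int.gcd_dvd_left _ _)
  have h3 : (d:ℤ) ∣ (Int.gcd B1 (Int.gcd A2 (Int.gcd B2 (2*C))) : ℤ) := h2.trans (Int.gcd_dvd_right _ _)
  have hdB1 : (d:ℤ) ∣ B1 := h3.trans (Int.gcd_dvd_left _ _)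
  have h4 : (d:ℤ) ∣ (Int.gcd A2 (Int.gcd B2 (2*C)) : ℤ) := h3.trans (Int.gcd_dvd_right _ _)
  have hdA2 : (d:ℤ) ∣ A2 := h4.trans (Int.gcd_dvd_left _ _)
  have h5 : (d:ℤ) ∣ (Int.gcd B2 (2*C) : ℤ) := h4.trans (Int.gcd_dvd_right _ _)
  have hdB2 : (d:ℤ) ∣ B2 := h5.trans (Int.gcd_dvd_left _ _)
  have hdC2 : (d:ℤ) ∣ 2*C := h5.trans (Int.gcd_dvd_right _ _)
  -- d ≠ 0
  have hd0 : d ≠ 0 := by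
    intro h0
    rw [h0] at hdA0 hdB0 hdA1 hdB1 hdA2 hdB2 hdC2
    simp only [Nat.cast_zero, zero_dvd_iff] at hdA0 hdB0 hdA1 hdB1 hdA2 hdB2 hdC2
    apply hv.1
    funext i
    rcases i with ⟨x, y⟩ | z
    · fin_cases x <;> fin_cases y <;> first
        | exact hdA0 | exact hdB0 | exact hdA1 | exact hdB1 | exact hdA2 | exact hdB2
    · fin_cases z
      show C = 0
      omega
  -- HasDiv v d
  have hd_has : HasDiv gram3 v (d:ℤ) := by
    refine ⟨by exact_mod_cast Nat.pos_of_ne_zero hd0, ?_, ?_⟩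
    · intro y
      rw [bf_eval]
      have e : A0 * y (.inl (1,0)) + B0 * y (.inl (0,0)) + A1 * y (.inl (1,1)) +
          B1 * y (.inl (0,1)) + A2 * y (.inl (1,2)) + B2 * y (.inl (0,2)) -
          2 * C * y (.inr 0)
          = A0 * y (.inl (1,0)) + B0 * y (.inl (0,0)) + A1 * y (.inl (1,1)) +
          B1 * y (.inl (0,1)) + A2 * y (.inl (1,2)) + B2 * y (.inl (0,2)) -
          (2 * C) * y (.inr 0) := by ring
      rw [e]
      exact dvd_sub (dvd_add (dvd_add (dvd_add (dvd_add (dvd_add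
        (hdA0.mul_right _) (hdB0.mul_right _)) (hdA1.mul_right _)) (hdB1.mul_right _))
        (hdA2.mul_right _)) (hdB2.mul_right _)) (hdC2.mul_right _)
    · intro s hs
      have hsA0 : s ∣ A0 := by have := hs (fv 0); rwa [bf_fv] at this
      have hsB0 : s ∣ B0 := by have := hs (ev 0); rwa [bf_ev] at this
      have hsA1 : s ∣ A1 := by have := hs (fv 1); rwa [bf_fv] at this
      have hsB1 : s ∣ B1 := by have := hs (ev 1); rwa [bf_ev] at this
      have hsA2 : s ∣ A2 := by have := hs (fv 2); rwa [bf_fv] at this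
      have hsB2 : s ∣ B2 := by have := hs (ev 2); rwa [bf_ev] at this
      have hsC : s ∣ 2*C := by
        have := hs dv
        rw [bf_dv] at this
        have e : 2*C = -(-2*C) := by ring
        rw [e]
        exact this.neg_right
      exact Int.dvd_coe_gcd hsA0 (Int.dvd_coe_gcd hsB0 (Int.dvd_coe_gcd hsA1 (Int.dvd_coe_gcd hsB1
        (Int.dvd_coe_gcd hsA2 (Int.dvd_coe_gcd hsB2 hsC)))))
  -- d = 1 or d = 2
  have hd12 : d = 1 ∨ d = 2 := by
    by_cases h2d : 2 ∣ d
    · right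
      obtain ⟨d', hd'⟩ := h2d
      have hdvd : ∀ i, (d':ℤ) ∣ v i := by
        have hC' : (d':ℤ) ∣ C := by
          have : (2:ℤ) * d' ∣ 2 * C := by
            rw [show ((2:ℤ) * d') = ((d:ℕ):ℤ) by rw [hd']; push_cast; ring]
            exact hdC2
          exact (mul_dvd_mul_iff_left (two_ne_zero)).mp this
        have hd'd : (d':ℤ) ∣ (d:ℤ) := by
          rw [hd']; push_cast; exact Dvd.intro_left 2 rfl
        intro i
        rcases i with ⟨x, y⟩ | z
        · fin_cases x <;> fin_cases y <;> first
            | exact hd'd.trans hdA0 | exact hd'd.trans hdB0 | exact hd'd.trans hdA1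
            | exact hd'd.trans hdB1 | exact hd'd.trans hdA2 | exact hd'd.trans hdB2
        · fin_cases z
          exact hC'
      have hu := isUnit_of_dvd_coords hv hdvd
      rcases Int.isUnit_iff.mp hu with h | h <;> omega
    · left
      have hcop : IsCoprime ((d:ℕ):ℤ) 2 := by
        rw [Int.isCoprime_iff_gcd_eq_one]
        have e : Int.gcd (d:ℤ) 2 = Nat.gcd d 2 := rfl
        rw [e]
        have h2 : Nat.gcd d 2 ∣ 2 := Nat.gcd_dvd_right d 2
        rcases (Nat.dvd_prime Nat.prime_two).mp h2 with h | h
        · exact h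
        · exfalso; exact h2d (h ▸ Nat.gcd_dvd_left d 2)
      have hdvd : ∀ i, (d:ℤ) ∣ v i := by
        have hC' : (d:ℤ) ∣ C := by
          exact hcop.dvd_of_dvd_mul_left hdC2
        intro i
        rcases i with ⟨x, y⟩ | z
        · fin_cases x <;> fin_cases y <;> first
            | exact hdA0 | exact hdB0 | exact hdA1 | exact hdB1 | exact hdA2 | exact hdB2
        · fin_cases z
          exact hC'
      have hu := isUnit_of_dvd_coords hv hdvd
      rcases Int.isUnit_iff.mp hu with h | h <;> omega
  rcases hd12 with h1 | h2
  · have hv1 : HasDiv gram3 v 1 := by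
      have := hd_has
      rw [h1] at this
      simpa using this
    have hw1 : HasDiv gram3 w 1 := (hdiff 1).mp hv1
    obtain ⟨i, hqv, hrv⟩ := div1_case v hv hv1
    obtain ⟨i', hqw, hrw⟩ := div1_case w hw hw1
    have hii : i = i' := by
      rw [hq, hqw] at hqv
      linarith
    subst hii
    exact hrv.trans hrw.symm
  · have hv2 : HasDiv gram3 v 2 := by
      have := hd_has
      rw [h2] at this
      simpa using this
    have hw2 : HasDiv gram3 w 2 := (hdiff 2).mp hv2
    obtain ⟨i, hqv, hrv⟩ := div2_case v hv hv2
    obtain ⟨i', hqw, hrw⟩ := div2_case w hw hw2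
    have hii : i = i' := by
      rw [hq, hqw] at hqv
      linarith
    subst hii
    exact hrv.trans hrw.symm
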